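/- For integers m ≥ 1 and r ≥ 2, and any integer w ≥ 0, the coefficient of x^w in ((1+x)^r - r·x)^m is at most C(m + ⌊w/2⌋ - ⌈w/r⌉, ⌊w/2⌋) · (2r-3)^w. -/

import Mathlib

open Polynomial Finset

/-- auxiliary dominating sequence -/
def cch (r j w : ℕ) : ℕ :=
  if j ≤ w / 2 ∧ (w + r - 1) / r ≤ w / 2 then
    (w / 2 - (w + r - 1) / r).choose (w / 2 - j) else 0

/-- auxiliary polynomial -/
noncomputable def Sp (r : ℕ) : Polynomial ℕ :=
  ∑ k ∈ Finset.Icc 2 r, Polynomial.C (r.choose k) * Polynomial.X ^ k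

lemma Sp_coeff (r u : ℕ) :
    (Sp r).coeff u = if u ∈ Finset.Icc 2 r then r.choose u else 0 := by
  simp [Sp, finset_sum_coeff, coeff_C_mul, coeff_X_pow]

lemma choose_add_le (d n k : ℕ) : n.choose k ≤ (n + d).choose (k + d) := by
  induction d with
  | zero => simp
  | succ d ih =>
      calc n.choose k ≤ (n + d).choose (k + d) := ih
      _ ≤ (n + d + 1).choose (k + d + 1) := by
        rw [Nat.choose_succ_succ]; exact Nat.le_add_right _ _

lemma geo_sum (r : ℕ) (hr : 2 ≤ r) :
    ∑ u ∈ Finset.Icc 2 r, 2 ^ (r - u) = 2 ^ (r - 1) - 1 := by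
  induction r, hr using Nat.le_induction with
  | base => decide
  | succ n hn ih =>
      rw [Finset.sum_Icc_succ_top (by omega), Nat.sub_self, pow_zero]
      have h2 : ∑ u ∈ Finset.Icc 2 n, 2 ^ (n + 1 - u) = 2 * ∑ u ∈ Finset.Icc 2 n, 2 ^ (n - u) := by
        rw [Finset.mul_sum]
        apply Finset.sum_congr rfl
        intro u hu
        rw [Finset.mem_Icc] at hu
        have : n + 1 - u = (n - u) + 1 := by omega
        rw [this, pow_succ, mul_comm]
      rw [h2, ih, Nat.add_sub_cancel]
      have h3 : 1 ≤ 2 ^ (n - 1) := Nat.one_le_two_pow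
      have h4 : 2 * 2 ^ (n - 1) = 2 ^ n := by
        rw [mul_comm, ← pow_succ]; congr 1; omega
      omega
lemma chq (r u : ℕ) (hr : 2 ≤ r) (hu : 2 ≤ u) : r.choose u ≤ (2 * r - 3) ^ u := by
  rcases eq_or_lt_of_le hr with h | h
  · -- r = 2
    subst h
    rcases eq_or_lt_of_le hu with h2 | h2
    · simp [← h2]
    · rw [Nat.choose_eq_zero_of_lt (by omega)]; exact Nat.zero_le _
  · calc r.choose u ≤ r ^ u := Nat.choose_le_pow r u
    _ ≤ (2 * r - 3) ^ u := Nat.pow_le_pow_left (by omega) u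

lemma chpow (r u : ℕ) (hr : 3 ≤ r) (hu : 2 ≤ u) :
    2 ^ (u - 1) * r.choose u ≤ (2 * r - 3) ^ u := by
  have h1 : 2 ^ (u - 1) ≤ Nat.factorial u := by
    have := @Nat.factorial_mul_pow_le_factorial 1 (u - 1)
    simpa [Nat.factorial, (by omega : 1 + (u - 1) = u)] using this
  calc 2 ^ (u - 1) * r.choose u ≤ (Nat.factorial u) * r.choose u := Nat.mul_le_mul_right _ h1
  _ = r.descFactorial u := (Nat.descFactorial_eq_factorial_mul_choose r u).symm
  _ ≤ r ^ u := Nat.descFactorial_le_pow r u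
  _ ≤ (2 * r - 3) ^ u := Nat.pow_le_pow_left (by omega) u

lemma sumB (r w : ℕ) (hr : 2 ≤ r) :
    ∑ u ∈ Finset.range (w + 1), (Sp r).coeff u * (2 * r - 3) ^ (w - u)
      ≤ (2 * r - 3) ^ w := by
  rcases eq_or_lt_of_le hr with h | h
  · -- r = 2 : q = 1
    subst h
    have : ∀ u ∈ Finset.range (w + 1),
        (Sp 2).coeff u * (2 * 2 - 3) ^ (w - u) = if u = 2 then 1 else 0 := by
      intro u _
      rw [Sp_coeff]
      rcases eq_or_ne u 2 with h2 | h2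
      · subst h2; norm_num
      · rw [if_neg h2, if_neg (by simp [Finset.mem_Icc]; omega)]; simp
    rw [Finset.sum_congr rfl this, Finset.sum_ite_eq' (Finset.range (w+1)) 2 (fun _ => 1)]
    split <;> simp
  · -- r ≥ 3
    have hr3 : 3 ≤ r := h
    have hpos : 0 < 2 ^ (r - 1) := Nat.pow_pos (by norm_num)
    apply Nat.le_of_mul_le_mul_left _ hpos
    rw [Finset.mul_sum]
    calc ∑ u ∈ Finset.range (w + 1), 2 ^ (r - 1) * ((Sp r).coeff u * (2 * r - 3) ^ (w - u))
        ≤ ∑ u ∈ Finset.range (w + 1),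
            (if u ∈ Finset.Icc 2 r then 2 ^ (r - u) * (2 * r - 3) ^ w else 0) := by
          apply Finset.sum_le_sum
          intro u hu
          rw [Finset.mem_range] at hu
          rw [Sp_coeff]
          by_cases hmem : u ∈ Finset.Icc 2 r
          · rw [if_pos hmem, if_pos hmem]
            rw [Finset.mem_Icc] at hmem
            have e1 : 2 ^ (r - 1) = 2 ^ (r - u) * 2 ^ (u - 1) := by
              rw [← pow_add]; congr 1; omega
            have e2 : (2 * r - 3) ^ w = (2 * r - 3) ^ u * (2 * r - 3) ^ (w - u) := by
              rw [← pow_add]; congr 1; omega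
            rw [e1, e2, mul_assoc]
            apply Nat.mul_le_mul_left
            rw [← mul_assoc]
            exact Nat.mul_le_mul_right _ (chpow r u hr3 hmem.1)

          · rw [if_neg hmem, if_neg hmem]; simp
      _ = ∑ u ∈ (Finset.range (w + 1)).filter (· ∈ Finset.Icc 2 r),
            2 ^ (r - u) * (2 * r - 3) ^ w := (Finset.sum_filter _ _).symm
      _ ≤ ∑ u ∈ Finset.Icc 2 r, 2 ^ (r - u) * (2 * r - 3) ^ w := by
          apply Finset.sum_le_sum_of_subset
          intro u hu
          simp only [Finset.mem_filter] at hu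
          exact hu.2
      _ = (∑ u ∈ Finset.Icc 2 r, 2 ^ (r - u)) * (2 * r - 3) ^ w := by
          rw [Finset.sum_mul]
      _ ≤ 2 ^ (r - 1) * (2 * r - 3) ^ w := by
          apply Nat.mul_le_mul_right
          rw [geo_sum r hr]
          omega
lemma div_ceil_le (r w u : ℕ) (hr : 0 < r) (hu : u ≤ r) :
    (w + r - 1) / r ≤ (w - u + r - 1) / r + 1 := by
  rw [← Nat.add_div_right _ hr]
  exact Nat.div_le_div_right (by omega)

lemma chooseA (r j u w : ℕ) (hr : 2 ≤ r) (hj : 1 ≤ j) (hu2 : 2 ≤ u) (hur : u ≤ r)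
    (huw : u ≤ w) : cch r j (w - u) ≤ cch r (j + 1) w := by
  unfold cch
  split
  case isFalse => exact Nat.zero_le _
  case isTrue hcond =>
    obtain ⟨hja, hba'⟩ := hcond
    set a := w / 2 with ha
    set a' := (w - u) / 2 with ha'
    set b := (w + r - 1) / r with hb
    set b' := (w - u + r - 1) / r with hb'
    have h1 : a' + 1 ≤ a := by omega
    have h2 : b ≤ b' + 1 := div_ceil_le r w u (by omega) hur
    have h3 : b ≤ a := by omega
    have h4 : j + 1 ≤ a := by omega
    rw [if_pos ⟨h4, h3⟩]
    have hd : a - (j + 1) = (a' - j) + (a - 1 - a') := by omega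
    have hn : (a' - b') + (a - 1 - a') ≤ a - b := by omega
    calc (a' - b').choose (a' - j)
        ≤ ((a' - b') + (a - 1 - a')).choose ((a' - j) + (a - 1 - a')) :=
          choose_add_le _ _ _
      _ ≤ (a - b).choose ((a' - j) + (a - 1 - a')) := Nat.choose_le_choose _ hn
      _ = (a - b).choose (a - (j + 1)) := by rw [hd]
lemma cch_zero_zero (r : ℕ) (hr : 2 ≤ r) : cch r 0 0 = 1 := by
  unfold cch
  rw [if_pos]
  · simp
  · constructor
    · simp
    · simp [Nat.div_eq_of_lt (show r - 1 < r by omega)]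

lemma key (r : ℕ) (hr : 2 ≤ r) : ∀ j w : ℕ,
    ((Sp r) ^ j).coeff w ≤ cch r j w * (2 * r - 3) ^ w := by
  intro j
  induction j with
  | zero =>
      intro w
      rcases Nat.eq_zero_or_pos w with h | h
      · subst h; simp [cch_zero_zero r hr]
      · rw [pow_zero, Polynomial.coeff_one, if_neg (by omega)]
        exact Nat.zero_le _
  | succ j ih =>
      rcases Nat.eq_zero_or_pos j with hj0 | hj1
      · -- j + 1 = 1
        subst hj0
        intro w
        rw [pow_one, Sp_coeff]
        by_cases hmem : w ∈ Finset.Icc 2 r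
        · rw [if_pos hmem]
          rw [Finset.mem_Icc] at hmem
          have hb1 : (w + r - 1) / r = 1 :=
            Nat.div_eq_of_lt_le (by omega) (by omega)
          have hcch : cch r 1 w = 1 := by
            unfold cch
            rw [if_pos ⟨by omega, by omega⟩, hb1, Nat.choose_self]
          rw [hcch, one_mul]
          exact chq r w hr hmem.1
        · rw [if_neg hmem]; exact Nat.zero_le _
      · -- j ≥ 1
        intro w
        rw [pow_succ', Polynomial.coeff_mul]
        calc ∑ x ∈ Finset.HasAntidiagonal.antidiagonal w, (Sp r).coeff x.1 * ((Sp r) ^ j).coeff x.2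
            ≤ ∑ x ∈ Finset.HasAntidiagonal.antidiagonal w,
                (Sp r).coeff x.1 * (cch r (j + 1) w * (2 * r - 3) ^ x.2) := by
              apply Finset.sum_le_sum
              intro x hx
              rw [Finset.HasAntidiagonal.mem_antidiagonal] at hx
              by_cases hmem : x.1 ∈ Finset.Icc 2 r
              · apply le_trans (Nat.mul_le_mul_left _ (ih x.2))
                apply Nat.mul_le_mul_left
                apply Nat.mul_le_mul_right
                rw [Finset.mem_Icc] at hmem
                have hx2 : x.2 = w - x.1 := by omega
                rw [hx2]
                exact chooseA r j x.1 w hr hj1 hmem.1 hmem.2 (by omega)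
              · rw [Sp_coeff, if_neg hmem]; simp
          _ = cch r (j + 1) w *
                ∑ x ∈ Finset.HasAntidiagonal.antidiagonal w, (Sp r).coeff x.1 * (2 * r - 3) ^ x.2 := by
              rw [Finset.mul_sum]
              apply Finset.sum_congr rfl
              intro x _; ring
          _ ≤ cch r (j + 1) w * (2 * r - 3) ^ w := by
              apply Nat.mul_le_mul_left
              rw [Finset.Nat.sum_antidiagonal_eq_sum_range_succ_mk]
              exact sumB r w hr
lemma finalSum (r m w : ℕ) :
    ∑ k ∈ Finset.range (m + 1), m.choose k * cch r k w
      ≤ (m + w / 2 - (w + r - 1) / r).choose (w / 2) := by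
  set a := w / 2 with ha
  set b := (w + r - 1) / r with hb
  by_cases hba : b ≤ a
  · have hc : ∀ k, cch r k w = if k ≤ a then (a - b).choose (a - k) else 0 := by
      intro k
      unfold cch
      rcases le_or_gt k a with h | h
      · rw [if_pos ⟨h, hba⟩, if_pos h]
      · rw [if_neg (by omega), if_neg (by omega)]
    calc ∑ k ∈ Finset.range (m + 1), m.choose k * cch r k w
        = ∑ k ∈ Finset.range (m + 1),
            (if k ≤ a then m.choose k * (a - b).choose (a - k) else 0) := by
          apply Finset.sum_congr rfl
          intro k _
          rw [hc k, mul_ite, mul_zero]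
      _ = ∑ k ∈ (Finset.range (m + 1)).filter (· ≤ a),
            m.choose k * (a - b).choose (a - k) := (Finset.sum_filter _ _).symm
      _ ≤ ∑ k ∈ Finset.range (a + 1), m.choose k * (a - b).choose (a - k) := by
          apply Finset.sum_le_sum_of_subset
          intro k hk
          simp only [Finset.mem_filter, Finset.mem_range] at hk ⊢
          omega
      _ = (m + (a - b)).choose a := by
          rw [Nat.add_choose_eq, Finset.Nat.sum_antidiagonal_eq_sum_range_succ_mk]
      _ = (m + a - b).choose a := by congr 1; omega
  · have hz : ∀ k ∈ Finset.range (m + 1), m.choose k * cch r k w = 0 := by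
      intro k _
      unfold cch
      rw [if_neg (by omega), mul_zero]
    rw [Finset.sum_eq_zero hz]
    exact Nat.zero_le _

/-- Coefficient bound for ((1+x)^r - r·x)^m : the coefficient of x^w is at most
C(m + ⌊w/2⌋ - ⌈w/r⌉, ⌊w/2⌋) · (2r-3)^w.  (Lemma 18 of Orlitsky–Viswanathan–Zhang.) -/
theorem stmt_4 (m r : ℕ) (hm : 1 ≤ m) (hr : 2 ≤ r) (w : ℕ) :
    (((1 + X : ℤ[X]) ^ r - (r : ℤ[X]) * X) ^ m).coeff w ≤
      (((m + w / 2 - (w + r - 1) / r).choose (w / 2) * (2 * r - 3) ^ w : ℕ) : ℤ) := by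
  have hmap : ((1 + X : ℤ[X]) ^ r - (r : ℤ[X]) * X) =
      Polynomial.map (Nat.castRingHom ℤ) (1 + Sp r) := by
    ext n
    rw [Polynomial.coeff_map, Polynomial.coeff_sub, Polynomial.coeff_one_add_X_pow]
    have hrX : ((r : ℤ[X]) * X).coeff n = if n = 1 then (r : ℤ) else 0 := by
      rw [Polynomial.coeff_natCast_mul, Polynomial.coeff_X]
      rcases eq_or_ne n 1 with h | h
      · subst h; simp
      · rw [if_neg (show ¬(1 = n) by omega), if_neg h, mul_zero]
    rw [hrX]
    have hT : ((1 : Polynomial ℕ) + Sp r).coeff n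
        = (if n = 0 then 1 else 0) + (if n ∈ Finset.Icc 2 r then r.choose n else 0) := by
      rw [Polynomial.coeff_add, Polynomial.coeff_one, Sp_coeff]
    rw [hT]
    match n with
    | 0 => simp
    | 1 => simp [Finset.mem_Icc, Nat.choose_one_right]
    | (n + 2) =>
        by_cases h : n + 2 ≤ r
        · simp [Finset.mem_Icc, h]
        · rw [Nat.choose_eq_zero_of_lt (by omega)]
          simp [Finset.mem_Icc, h]
  rw [hmap, ← Polynomial.map_pow, Polynomial.coeff_map]
  rw [show (Nat.castRingHom ℤ) (((1 + Sp r) ^ m).coeff w)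
      = ((((1 + Sp r) ^ m).coeff w : ℕ) : ℤ) from rfl]
  rw [Nat.cast_le]
  have hadd : ((1 : Polynomial ℕ) + Sp r) ^ m
      = ∑ k ∈ Finset.range (m + 1), (Sp r) ^ k * (m.choose k : Polynomial ℕ) := by
    rw [add_comm]
    rw [add_pow]
    apply Finset.sum_congr rfl
    intro k _
    rw [one_pow, mul_one]
  rw [hadd, Polynomial.finset_sum_coeff]
  calc ∑ k ∈ Finset.range (m + 1), ((Sp r) ^ k * (m.choose k : Polynomial ℕ)).coeff w
      = ∑ k ∈ Finset.range (m + 1), ((Sp r) ^ k).coeff w * m.choose k := by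
        apply Finset.sum_congr rfl
        intro k _
        rw [Polynomial.coeff_mul_natCast]
        simp
    _ ≤ ∑ k ∈ Finset.range (m + 1), (cch r k w * (2 * r - 3) ^ w) * m.choose k := by
        apply Finset.sum_le_sum
        intro k _
        exact Nat.mul_le_mul_right _ (key r hr k w)
    _ = (∑ k ∈ Finset.range (m + 1), m.choose k * cch r k w) * (2 * r - 3) ^ w := by
        rw [Finset.sum_mul]
        apply Finset.sum_congr rfl
        intro k _
        ring
    _ ≤ (m + w / 2 - (w + r - 1) / r).choose (w / 2) * (2 * r - 3) ^ w :=
        Nat.mul_le_mul_right _ (finalSum r m w)
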